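/- arXiv:1407.0836 — 4 statements merged into one kernel-verified Lean document; each statement's English description precedes it below -/
import Mathlib

section
/- Let ρ be a symmetric probability measure on ℝ which is not the Dirac mass at 0. Then for every nonzero real s, ∫ exp(s z - s^2 z^2 / 2) dρ(z) < 1. -/
open MeasureTheory

lemma cosh_lt_exp_half_sq {x : ℝ} (hx : x ≠ 0) : Real.cosh x < Real.exp (x ^ 2 / 2) := by
  rw [Real.cosh_eq_tsum, Real.exp_eq_exp_ℝ, NormedSpace.exp_eq_tsum ℝ]
  refine Summable.tsum_lt_tsum_of_nonneg (i := 2) (fun b => ?_) (fun b => ?_) ?_ <|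
    NormedSpace.expSeries_summable' (𝕂 := ℝ) (x ^ 2 / 2)
  · rw [pow_mul]; positivity
  · simp only [div_pow, pow_mul, smul_eq_mul, inv_mul_eq_div, div_div]
    gcongr
    norm_cast
    exact Nat.two_pow_mul_factorial_le_factorial_two_mul _
  · simp only [div_pow, pow_mul, smul_eq_mul, inv_mul_eq_div, div_div]
    have h0 : (0:ℝ) < (x ^ 2) ^ 2 := by positivity
    rw [div_lt_div_iff₀ (by norm_num [Nat.factorial]) (by norm_num [Nat.factorial])]
    norm_num [Nat.factorial]
    nlinarith

theorem integral_exp_lt_one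
    (ρ : Measure ℝ) [IsProbabilityMeasure ρ]
    (hsym : ρ.map (fun z => -z) = ρ) (hρ : ρ ≠ Measure.dirac 0)
    (s : ℝ) (hs : s ≠ 0) :
    ∫ z, Real.exp (s * z - s ^ 2 * z ^ 2 / 2) ∂ρ < 1 := by
  set f : ℝ → ℝ := fun z => Real.exp (s * z - s ^ 2 * z ^ 2 / 2) with hf
  set G : ℝ → ℝ := fun z => Real.cosh (s * z) * Real.exp (-(s ^ 2 * z ^ 2 / 2)) with hGdef
  have hGle : ∀ z, G z ≤ 1 := by
    intro z
    have h1 : Real.cosh (s * z) ≤ Real.exp ((s * z) ^ 2 / 2) := Real.cosh_le_exp_half_sq _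
    have h2 : (s * z) ^ 2 = s ^ 2 * z ^ 2 := mul_pow s z 2
    calc G z ≤ Real.exp (s ^ 2 * z ^ 2 / 2) * Real.exp (-(s ^ 2 * z ^ 2 / 2)) := by
          refine mul_le_mul_of_nonneg_right ?_ (Real.exp_nonneg _)
          rw [← h2]; exact h1
      _ = 1 := by rw [← Real.exp_add]; simp
  have hGlt : ∀ z ≠ 0, G z < 1 := by
    intro z hz
    have h1 : Real.cosh (s * z) < Real.exp ((s * z) ^ 2 / 2) :=
      cosh_lt_exp_half_sq (mul_ne_zero hs hz)
    have h2 : (s * z) ^ 2 = s ^ 2 * z ^ 2 := mul_pow s z 2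
    calc G z < Real.exp (s ^ 2 * z ^ 2 / 2) * Real.exp (-(s ^ 2 * z ^ 2 / 2)) := by
          refine mul_lt_mul_of_pos_right ?_ (Real.exp_pos _)
          rw [← h2]; exact h1
      _ = 1 := by rw [← Real.exp_add]; simp
  have hcont_f : Continuous f := by fun_prop
  have hcont_G : Continuous G := by fun_prop
  have hf_bdd : ∀ z, ‖f z‖ ≤ Real.exp (1/2) := by
    intro z
    rw [Real.norm_eq_abs, Real.abs_exp]
    apply Real.exp_le_exp.2
    nlinarith [sq_nonneg (s * z - 1), mul_pow s z 2]
  have hf_int : Integrable f ρ :=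
    Integrable.mono' (integrable_const _) hcont_f.aestronglyMeasurable
      (Filter.Eventually.of_forall hf_bdd)
  have hG_int : Integrable G ρ := by
    refine Integrable.mono' (integrable_const 1) hcont_G.aestronglyMeasurable
      (Filter.Eventually.of_forall fun z => ?_)
    rw [Real.norm_eq_abs, abs_of_nonneg (by positivity)]
    exact hGle z
  -- symmetry step
  have hneg_int : Integrable (fun z => f (-z)) ρ := by
    have : Integrable f (ρ.map fun z => -z) := by rwa [hsym]
    exact (integrable_map_measure hcont_f.aestronglyMeasurable
      measurable_neg.aemeasurable).1 this
  have hmap : ∫ z, f z ∂ρ = ∫ z, f (-z) ∂ρ := by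
    conv_lhs => rw [← hsym]
    rw [integral_map measurable_neg.aemeasurable (by rw [hsym]; exact hcont_f.aestronglyMeasurable)]
  have hkey : ∫ z, f z ∂ρ = ∫ z, G z ∂ρ := by
    have hptw : ∀ z, G z = (f z + f (-z)) / 2 := by
      intro z
      simp only [hf, hGdef, Real.cosh_eq]
      rw [sub_eq_add_neg, Real.exp_add, sub_eq_add_neg, Real.exp_add]
      ring_nf
    rw [show (∫ z, G z ∂ρ) = ∫ z, (f z + f (-z)) / 2 ∂ρ from integral_congr_ae
      (Filter.Eventually.of_forall hptw)]
    rw [integral_div, integral_add hf_int hneg_int, ← hmap]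
    ring
  rw [hkey]
  -- strict inequality
  have h1G_int : Integrable (fun z => 1 - G z) ρ := (integrable_const 1).sub hG_int
  have hpos : 0 < ∫ z, (1 - G z) ∂ρ := by
    rw [integral_pos_iff_support_of_nonneg_ae
      (Filter.Eventually.of_forall fun z => by simpa using hGle z) h1G_int]
    have hsupp : Function.support (fun z => 1 - G z) = {(0:ℝ)}ᶜ := by
      ext z
      simp only [Function.mem_support, Set.mem_compl_iff, Set.mem_singleton_iff]
      constructor
      · rintro h rfl
        apply h
        simp [hGdef]
      · intro hz
        have := hGlt z hz
        intro hcontra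
        have : G z = 1 := by linarith [sub_eq_zero.1 hcontra]
        linarith [hGlt z hz]
    rw [hsupp]
    by_contra hc
    push_neg at hc
    have hzero : ρ {(0:ℝ)}ᶜ = 0 := le_antisymm hc zero_le
    apply hρ
    ext t ht
    rw [Measure.dirac_apply' _ ht]
    by_cases h0 : (0:ℝ) ∈ t
    · have hsub : tᶜ ⊆ {(0:ℝ)}ᶜ := fun x hx => by
        simp only [Set.mem_compl_iff, Set.mem_singleton_iff]
        rintro rfl; exact hx h0
      have : ρ tᶜ = 0 := le_antisymm ((measure_mono hsub).trans hzero.le) zero_le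
      have := measure_compl ht.compl (measure_ne_top ρ _)
      rw [compl_compl] at this
      simp [Set.indicator_of_mem h0, ‹ρ tᶜ = 0›] at this ⊢
      exact this
    · have hsub : t ⊆ {(0:ℝ)}ᶜ := fun x hx => by
        simp only [Set.mem_compl_iff, Set.mem_singleton_iff]
        rintro rfl; exact h0 hx
      simp [Set.indicator_of_notMem h0]
      exact le_antisymm ((measure_mono hsub).trans hzero.le) zero_le
  have := integral_sub (integrable_const 1) hG_int
  simp only [integral_const, measure_univ, ENNReal.toReal_one, probReal_univ, smul_eq_mul, one_mul] at this
  linarith [hpos, this ▸ hpos]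
end

section
/- Let ρ be a symmetric probability measure on ℝ which is not the Dirac mass at 0, and define the Cramér transform I(x,y) = sup over (u,v) ∈ ℝ² of (u x + v y - log ∫ exp(u z + v z^2) dρ(z)). Then for all nonzero reals x and y, I(x,y) > x^2/(2y). -/
open MeasureTheory

lemma my_compl_pos (ρ : Measure ℝ) [IsProbabilityMeasure ρ]
    (hρ : ρ ≠ Measure.dirac 0) : ρ ({(0 : ℝ)}ᶜ) ≠ 0 := by
  intro h
  apply hρ
  have h0 : ρ {(0 : ℝ)} = 1 := by
    have := measure_add_measure_compl (μ := ρ) (measurableSet_singleton (0 : ℝ))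
    rw [h, add_zero] at this
    simpa using this
  ext s hs
  rw [Measure.dirac_apply' _ hs]
  by_cases h0s : (0 : ℝ) ∈ s
  · have h1 : ρ s ≤ 1 := prob_le_one
    have h2 : (1 : ENNReal) ≤ ρ s := by
      rw [← h0]; exact measure_mono (Set.singleton_subset_iff.2 h0s)
    simp [Set.indicator_of_mem h0s, le_antisymm h1 h2]
  · have : s ⊆ {(0 : ℝ)}ᶜ := fun z hz => by
      simp only [Set.mem_compl_iff, Set.mem_singleton_iff]
      rintro rfl; exact h0s hz
    simp [Set.indicator_of_notMem h0s, le_antisymm (h ▸ measure_mono this) zero_le]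

lemma my_cosh_lt {t : ℝ} (ht : t ≠ 0) : Real.cosh t < Real.exp (t ^ 2 / 2) := by
  have h1 : Real.cosh (t / 2) ≤ Real.exp ((t / 2) ^ 2 / 2) := Real.cosh_le_exp_half_sq _
  have e0 : (t / 2) ^ 2 / 2 = t ^ 2 / 8 := by ring
  rw [e0] at h1
  have e1 : Real.exp (t ^ 2 / 8) ^ 2 = Real.exp (t ^ 2 / 4) := by
    rw [sq, ← Real.exp_add]; ring_nf
  have e2 : Real.exp (t ^ 2 / 4) ^ 2 = Real.exp (t ^ 2 / 2) := by
    rw [sq, ← Real.exp_add]; ring_nf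
  have hb : 1 < Real.exp (t ^ 2 / 4) := by
    rw [Real.one_lt_exp_iff]; positivity
  have hc : Real.cosh t = 2 * Real.cosh (t / 2) ^ 2 - 1 := by
    have h := Real.cosh_two_mul (t / 2)
    rw [show 2 * (t / 2) = t by ring] at h
    rw [h, Real.sinh_sq]; ring
  have hcp : 0 < Real.cosh (t / 2) := Real.cosh_pos _
  nlinarith [sq_nonneg (Real.exp (t ^ 2 / 4) - 1)]

lemma my_key (ρ : Measure ℝ) [IsProbabilityMeasure ρ]
    (hsym : ρ.map (fun z => -z) = ρ) (hcompl : ρ ({(0 : ℝ)}ᶜ) ≠ 0)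
    (u : ℝ) (hu : u ≠ 0) :
    ∫⁻ z, ENNReal.ofReal (Real.exp (u * z + (-(u ^ 2) / 2) * z ^ 2)) ∂ρ < 1 := by
  set v : ℝ := -(u ^ 2) / 2 with hv
  set f : ℝ → ENNReal := fun z => ENNReal.ofReal (Real.exp (u * z + v * z ^ 2)) with hf
  set g : ℝ → ENNReal := fun z => ENNReal.ofReal (Real.exp (-u * z + v * z ^ 2)) with hg
  set D : ℝ → ENNReal :=
    fun z => ENNReal.ofReal (2 - 2 * Real.cosh (u * z) * Real.exp (v * z ^ 2)) with hD
  have hfm : Measurable f := by fun_prop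
  have hgm : Measurable g := by fun_prop
  have hDm : Measurable D := by fun_prop
  -- pointwise bound: 2 * cosh (u z) * exp (v z²) ≤ 2
  have hbd : ∀ z : ℝ, 2 * Real.cosh (u * z) * Real.exp (v * z ^ 2) ≤ 2 := by
    intro z
    have h1 : Real.cosh (u * z) ≤ Real.exp ((u * z) ^ 2 / 2) := Real.cosh_le_exp_half_sq _
    have h2 : Real.exp ((u * z) ^ 2 / 2) * Real.exp (v * z ^ 2) = 1 := by
      rw [← Real.exp_add, hv, show (u * z) ^ 2 / 2 + -(u ^ 2) / 2 * z ^ 2 = 0 by ring,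
        Real.exp_zero]
    nlinarith [Real.exp_pos (v * z ^ 2), Real.cosh_pos (u * z)]
  -- f + g pointwise
  have hfgadd : ∀ z : ℝ, f z + g z = ENNReal.ofReal (2 * Real.cosh (u * z) * Real.exp (v * z ^ 2)) := by
    intro z
    rw [hf, hg, ← ENNReal.ofReal_add (Real.exp_nonneg _) (Real.exp_nonneg _)]
    congr 1
    rw [Real.cosh_eq, Real.exp_add, Real.exp_add, show -u * z = -(u * z) by ring]
    ring
  have hsum : ∀ z : ℝ, f z + g z + D z = 2 := by
    intro z
    rw [hfgadd z, hD]
    rw [← ENNReal.ofReal_add (by nlinarith [Real.exp_pos (v * z ^ 2), Real.cosh_pos (u * z)]) (by linarith [hbd z])]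
    norm_num
  -- symmetry: ∫ f = ∫ g
  have hfg : ∫⁻ z, f z ∂ρ = ∫⁻ z, g z ∂ρ := by
    conv_lhs => rw [← hsym]
    rw [lintegral_map hfm measurable_neg]
    congr 1; funext z
    simp only [hf, hg]
    congr 2
    ring
  -- total
  have htot : (∫⁻ z, f z ∂ρ + ∫⁻ z, g z ∂ρ) + ∫⁻ z, D z ∂ρ = 2 := by
    rw [← lintegral_add_left hfm, ← lintegral_add_left (f := fun a => f a + g a) (hfm.add hgm)]
    calc ∫⁻ z, f z + g z + D z ∂ρ = ∫⁻ _, (2 : ENNReal) ∂ρ := by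
          congr 1; funext z; exact hsum z
      _ = 2 := by simp
  -- ∫ D > 0
  have hDpos : ∫⁻ z, D z ∂ρ ≠ 0 := by
    rw [← pos_iff_ne_zero, lintegral_pos_iff_support hDm]
    have hsub : {(0 : ℝ)}ᶜ ⊆ Function.support D := by
      intro z hz
      simp only [Set.mem_compl_iff, Set.mem_singleton_iff] at hz
      have huz : u * z ≠ 0 := mul_ne_zero hu hz
      have hlt : Real.cosh (u * z) < Real.exp ((u * z) ^ 2 / 2) := my_cosh_lt huz
      have h2 : Real.exp ((u * z) ^ 2 / 2) * Real.exp (v * z ^ 2) = 1 := by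
        rw [← Real.exp_add, hv, show (u * z) ^ 2 / 2 + -(u ^ 2) / 2 * z ^ 2 = 0 by ring,
          Real.exp_zero]
      have : 2 * Real.cosh (u * z) * Real.exp (v * z ^ 2) < 2 := by
        nlinarith [Real.exp_pos (v * z ^ 2)]
      simp only [Function.mem_support, hD, ne_eq, ENNReal.ofReal_eq_zero, not_le]
      linarith
    exact lt_of_lt_of_le (pos_iff_ne_zero.2 hcompl) (measure_mono hsub)
  have hA_ne_top : (∫⁻ z, f z ∂ρ + ∫⁻ z, g z ∂ρ) ≠ ⊤ := by
    intro h
    rw [h] at htot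
    exact ENNReal.ofNat_ne_top htot.symm
  have hAlt : (∫⁻ z, f z ∂ρ + ∫⁻ z, g z ∂ρ) < 2 := by
    calc (∫⁻ z, f z ∂ρ + ∫⁻ z, g z ∂ρ)
        < (∫⁻ z, f z ∂ρ + ∫⁻ z, g z ∂ρ) + ∫⁻ z, D z ∂ρ :=
          ENNReal.lt_add_right hA_ne_top hDpos
      _ = 2 := htot
  rw [← hfg, ← two_mul] at hAlt
  have h1 : (2 : ENNReal) * ∫⁻ z, f z ∂ρ < 2 * 1 := by simpa using hAlt
  exact (ENNReal.mul_lt_mul_iff_right two_ne_zero ENNReal.ofNat_ne_top).mp h1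

lemma my_ereal_lt (c t : ℝ) (b : EReal) (hb : b ≤ 0) (hct : c ≤ t)
    (h : c < t ∨ b < 0) : (c : EReal) < (t : EReal) - b := by
  induction b with
  | bot => simp [EReal.coe_lt_top]
  | coe r =>
    rw [← EReal.coe_sub, EReal.coe_lt_coe_iff]
    have hr : r ≤ 0 := by exact_mod_cast hb
    rcases h with h | h
    · linarith
    · have : r < 0 := by exact_mod_cast h
      linarith
  | top => exact absurd hb (by simp)

theorem cramer_transform_gt
    (ρ : Measure ℝ) [IsProbabilityMeasure ρ]
    (hsym : ρ.map (fun z => -z) = ρ) (hρ : ρ ≠ Measure.dirac 0)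
    (I : ℝ → ℝ → EReal)
    (hI : ∀ x y : ℝ, I x y = ⨆ (u : ℝ) (v : ℝ),
      (((u * x + v * y : ℝ) : EReal)
        - ENNReal.log (∫⁻ z, ENNReal.ofReal (Real.exp (u * z + v * z ^ 2)) ∂ρ)))
    (x y : ℝ) (hx : x ≠ 0) (hy : y ≠ 0) :
    ((x ^ 2 / (2 * y) : ℝ) : EReal) < I x y := by
  rw [hI]
  set F : ℝ → ℝ → EReal := fun u v => (((u * x + v * y : ℝ) : EReal)
      - ENNReal.log (∫⁻ z, ENNReal.ofReal (Real.exp (u * z + v * z ^ 2)) ∂ρ)) with hF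
  rcases lt_or_gt_of_ne hy with hylt | hygt
  · -- y < 0
    set t : ℝ := |x ^ 2 / (2 * y)| + 1 with ht
    have ht0 : 0 < t := by positivity
    set v : ℝ := t / y with hvdef
    have hv0 : v ≤ 0 := div_nonpos_of_nonneg_of_nonpos ht0.le hylt.le
    have hvy : 0 * x + v * y = t := by rw [hvdef]; field_simp; ring
    have hle : (∫⁻ z, ENNReal.ofReal (Real.exp (0 * z + v * z ^ 2)) ∂ρ) ≤ 1 := by
      calc (∫⁻ z, ENNReal.ofReal (Real.exp (0 * z + v * z ^ 2)) ∂ρ)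
          ≤ ∫⁻ _, 1 ∂ρ := by
            apply lintegral_mono
            intro z
            rw [show (1 : ENNReal) = ENNReal.ofReal 1 by simp]
            apply ENNReal.ofReal_le_ofReal
            rw [Real.exp_le_one_iff]
            nlinarith [sq_nonneg z]
        _ = 1 := by simp
    have hlog : ENNReal.log (∫⁻ z, ENNReal.ofReal (Real.exp (0 * z + v * z ^ 2)) ∂ρ) ≤ 0 :=
      (ENNReal.log_monotone hle).trans_eq ENNReal.log_one
    have hterm : ((x ^ 2 / (2 * y) : ℝ) : EReal) < F 0 v := by
      rw [hF]
      simp only [hvy]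
      exact my_ereal_lt _ _ _ hlog (by rw [ht]; nlinarith [le_abs_self (x ^ 2 / (2 * y))])
        (Or.inl (by rw [ht]; nlinarith [le_abs_self (x ^ 2 / (2 * y))]))
    exact lt_of_lt_of_le hterm (le_iSup₂ (f := F) 0 v)
  · -- y > 0
    set u : ℝ := x / y with hudef
    have hu : u ≠ 0 := div_ne_zero hx hy
    set v : ℝ := -(u ^ 2) / 2 with hvdef
    have hval : u * x + v * y = x ^ 2 / (2 * y) := by
      rw [hvdef, hudef]
      field_simp
      ring
    have hkey : ∫⁻ z, ENNReal.ofReal (Real.exp (u * z + v * z ^ 2)) ∂ρ < 1 :=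
      my_key ρ hsym (my_compl_pos ρ hρ) u hu
    have hlog : ENNReal.log (∫⁻ z, ENNReal.ofReal (Real.exp (u * z + v * z ^ 2)) ∂ρ) < 0 := by
      rw [← ENNReal.log_one]
      exact ENNReal.log_lt_log_iff.mpr hkey
    have hterm : ((x ^ 2 / (2 * y) : ℝ) : EReal) < F u v := by
      rw [hF]
      simp only [hval]
      exact my_ereal_lt _ _ _ hlog.le le_rfl (Or.inr hlog)
    exact lt_of_lt_of_le hterm (le_iSup₂ (f := F) u v)
end

section
/- Let ρ be a symmetric probability measure on ℝ which is not the Dirac mass at 0, and let μ be a probability measure on ℝ with finite first moment, μ ≠ ρ, ∫ z dμ(z) ≠ 0, finite second moment, and finite relative entropy H(μ|ρ). Then H(μ|ρ) > (∫ z dμ(z))² / (2 ∫ z² dμ(z)). -/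
open MeasureTheory

lemma aux_mul_log_ge {x : ℝ} (hx : 0 < x) : x - 1 ≤ x * Real.log x := by
  have h := Real.one_sub_inv_le_log_of_pos hx
  have h2 := mul_le_mul_of_nonneg_left h hx.le
  have hx' : x * (1 - x⁻¹) = x - 1 := by field_simp
  nlinarith

private noncomputable def PhiF : ℝ → ℝ :=
  fun t => (1+t) * Real.log (1+t) + (1-t) * Real.log (1-t) - t^2

lemma aux_psi_pos {t : ℝ} (ht : t ∈ Set.Ioo (0:ℝ) 1) :
    0 < Real.log (1+t) - Real.log (1-t) - 2*t := by
  set ψ : ℝ → ℝ := fun t => Real.log (1+t) - Real.log (1-t) - 2*t with hψ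
  have hmono : StrictMonoOn ψ (Set.Ico (0:ℝ) 1) := by
    apply strictMonoOn_of_deriv_pos (convex_Ico 0 1)
    · apply ContinuousOn.sub (ContinuousOn.sub ?_ ?_) (continuous_const.mul continuous_id).continuousOn
      · intro x hx
        exact ((Real.continuousAt_log (by nlinarith [hx.1] : (1:ℝ)+x ≠ 0)).comp
          ((continuous_const.add continuous_id).continuousAt)).continuousWithinAt
      · intro x hx
        exact ((Real.continuousAt_log (by nlinarith [hx.2] : (1:ℝ)-x ≠ 0)).comp
          ((continuous_const.sub continuous_id).continuousAt)).continuousWithinAt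
    · intro x hx
      rw [interior_Ico] at hx
      obtain ⟨hx0, hx1⟩ := hx
      have h1 : (0:ℝ) < 1 + x := by linarith
      have h2 : (0:ℝ) < 1 - x := by linarith
      have d1 : HasDerivAt (fun t : ℝ => Real.log (1+t)) (1/(1+x)) x := by
        have hi : HasDerivAt (fun t : ℝ => 1+t) 1 x := (hasDerivAt_id x).const_add 1
        exact ((Real.hasDerivAt_log h1.ne').comp x hi).congr_deriv (by simp)
      have d2 : HasDerivAt (fun t : ℝ => Real.log (1-t)) (-(1/(1-x))) x := by
        have hi : HasDerivAt (fun t : ℝ => 1-t) (-1) x := (hasDerivAt_id x).const_sub 1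
        have := (Real.hasDerivAt_log h2.ne').comp x hi
        exact this.congr_deriv (by simp)
      have d3 : HasDerivAt ψ (1/(1+x) + 1/(1-x) - 2) x := by
        have := ((d1.sub d2).sub ((hasDerivAt_id x).const_mul 2))
        exact this.congr_deriv (by ring)
      rw [d3.deriv]
      have : 1/(1+x) + 1/(1-x) - 2 = 2*x^2/((1+x)*(1-x)) := by field_simp; ring
      rw [this]
      positivity
  have h0 : ψ 0 = 0 := by simp [hψ]
  have := hmono (Set.mem_Ico.mpr ⟨le_refl 0, one_pos⟩) (Set.mem_Ico.mpr ⟨ht.1.le, ht.2⟩) ht.1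
  rw [h0] at this
  exact this

lemma aux_phi_pos {t : ℝ} (ht : t ∈ Set.Ioc (0:ℝ) 1) : 0 < PhiF t := by
  have hmono : StrictMonoOn PhiF (Set.Icc (0:ℝ) 1) := by
    apply strictMonoOn_of_deriv_pos (convex_Icc 0 1)
    · have : Continuous PhiF := by
        have h1 : Continuous fun t : ℝ => (1+t) * Real.log (1+t) :=
          Real.continuous_mul_log.comp (continuous_const.add continuous_id)
        have h2 : Continuous fun t : ℝ => (1-t) * Real.log (1-t) :=
          Real.continuous_mul_log.comp (continuous_const.sub continuous_id)
        exact (h1.add h2).sub (continuous_pow 2)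
      exact this.continuousOn
    · intro x hx
      rw [interior_Icc] at hx
      obtain ⟨hx0, hx1⟩ := hx
      have h1 : (0:ℝ) < 1 + x := by linarith
      have h2 : (0:ℝ) < 1 - x := by linarith
      have d1 : HasDerivAt (fun t : ℝ => (1+t) * Real.log (1+t))
          (Real.log (1+x) + 1) x := by
        have hi : HasDerivAt (fun t : ℝ => 1+t) 1 x := (hasDerivAt_id x).const_add 1
        have dl : HasDerivAt (fun t : ℝ => Real.log (1+t)) (1/(1+x)) x := by
          exact ((Real.hasDerivAt_log h1.ne').comp x hi).congr_deriv (by simp)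
        have := hi.mul dl
        exact this.congr_deriv (by field_simp)
      have d2 : HasDerivAt (fun t : ℝ => (1-t) * Real.log (1-t))
          (-Real.log (1-x) - 1) x := by
        have hi : HasDerivAt (fun t : ℝ => 1-t) (-1) x := (hasDerivAt_id x).const_sub 1
        have dl : HasDerivAt (fun t : ℝ => Real.log (1-t)) (-(1/(1-x))) x := by
          exact ((Real.hasDerivAt_log h2.ne').comp x hi).congr_deriv (by simp)
        have := hi.mul dl
        exact this.congr_deriv (by field_simp; ring)
      have d3 : HasDerivAt PhiF (Real.log (1+x) - Real.log (1-x) - 2*x) x := by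
        have := (d1.add d2).sub (hasDerivAt_pow 2 x)
        unfold PhiF
        exact this.congr_deriv (by ring)
      rw [d3.deriv]
      exact aux_psi_pos ⟨hx0, hx1⟩
  have h0 : PhiF 0 = 0 := by simp [PhiF]
  have := hmono (Set.mem_Icc.mpr ⟨le_refl 0, zero_le_one⟩) (Set.mem_Icc.mpr ⟨ht.1.le, ht.2⟩) ht.1
  rw [h0] at this
  exact this

lemma aux_phi_nonneg {t : ℝ} (ht : t ∈ Set.Icc (-1:ℝ) 1) :
    t^2 ≤ (1+t) * Real.log (1+t) + (1-t) * Real.log (1-t) := by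
  rcases lt_trichotomy t 0 with h|h|h
  · have : 0 < PhiF (-t) := aux_phi_pos ⟨by linarith, by linarith [ht.1]⟩
    unfold PhiF at this
    have he : (1 + -t) * Real.log (1 + -t) + (1 - -t) * Real.log (1 - -t) - (-t)^2
        = (1+t) * Real.log (1+t) + (1-t) * Real.log (1-t) - t^2 := by
      rw [show (1:ℝ) + -t = 1 - t by ring, show (1:ℝ) - -t = 1 + t by ring]
      ring
    rw [he] at this
    linarith
  · subst h; simp
  · have : 0 < PhiF t := aux_phi_pos ⟨h, ht.2⟩
    unfold PhiF at this
    linarith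

lemma aux_phi_strict {t : ℝ} (ht : t ∈ Set.Icc (-1:ℝ) 1) (ht0 : t ≠ 0) :
    t^2 < (1+t) * Real.log (1+t) + (1-t) * Real.log (1-t) := by
  rcases lt_trichotomy t 0 with h|h|h
  · have : 0 < PhiF (-t) := aux_phi_pos ⟨by linarith, by linarith [ht.1]⟩
    unfold PhiF at this
    have he : (1 + -t) * Real.log (1 + -t) + (1 - -t) * Real.log (1 - -t) - (-t)^2
        = (1+t) * Real.log (1+t) + (1-t) * Real.log (1-t) - t^2 := by
      rw [show (1:ℝ) + -t = 1 - t by ring, show (1:ℝ) - -t = 1 + t by ring]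
      ring
    rw [he] at this
    linarith
  · exact absurd h ht0
  · have : 0 < PhiF t := aux_phi_pos ⟨h, ht.2⟩
    unfold PhiF at this
    linarith


lemma aux_split {a F t : ℝ} (ha : 0 ≤ a) (hF : 0 < F) (hval : a = F * (1+t)) :
    a * Real.log a = a * Real.log F + a * Real.log (1+t) := by
  rcases eq_or_lt_of_le ha with h|h
  · simp [← h]
  · have h1t : 0 < 1 + t := by
      by_contra hc
      push_neg at hc
      nlinarith
    rw [hval, Real.log_mul hF.ne' h1t.ne']
    ring

lemma key_ineq {a b : ℝ} (ha : 0 ≤ a) (hb : 0 ≤ b) :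
    (a-b)^2/(4*(a+b)) ≤ (a * Real.log a + b * Real.log b)/2 - ((a+b)/2 - 1) := by
  rcases eq_or_lt_of_le (by linarith : (0:ℝ) ≤ a + b) with hs|hs
  · have ha0 : a = 0 := by linarith
    have hb0 : b = 0 := by linarith
    subst ha0; subst hb0
    norm_num
  · set F : ℝ := (a+b)/2 with hFdef
    set t : ℝ := (a-b)/(a+b) with htdef
    have hF : 0 < F := by positivity
    have ha' : a = F*(1+t) := by rw [hFdef, htdef]; field_simp; ring
    have hb' : b = F*(1+(-t)) := by rw [hFdef, htdef]; field_simp; ring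
    have ht : t ∈ Set.Icc (-1:ℝ) 1 := by
      constructor
      · rw [htdef, le_div_iff₀ hs]; linarith
      · rw [htdef, div_le_one hs]; linarith
    have e1 : a * Real.log a = a * Real.log F + a * Real.log (1+t) :=
      aux_split ha hF ha'
    have e2 : b * Real.log b = b * Real.log F + b * Real.log (1-t) := by
      have := aux_split hb hF hb'
      rw [show (1:ℝ)+(-t) = 1-t by ring] at this
      exact this
    have h2F : a + b = 2*F := by rw [hFdef]; ring
    have e3 : a * Real.log F + b * Real.log F = 2*(F*Real.log F) :=
      calc a * Real.log F + b * Real.log F = (a+b) * Real.log F := by ring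
        _ = 2*(F*Real.log F) := by rw [h2F]; ring
    have e4 : F - 1 ≤ F * Real.log F := aux_mul_log_ge hF
    have e5' : F*((1+t)*Real.log (1+t)+(1-t)*Real.log (1-t))
        = a*Real.log (1+t) + b*Real.log (1-t) := by
      rw [ha', hb']; ring
    have e5 : F*t^2 ≤ a*Real.log (1+t) + b*Real.log (1-t) := by
      rw [← e5']
      exact mul_le_mul_of_nonneg_left (aux_phi_nonneg ht) hF.le
    have e6 : (a-b)^2/(4*(a+b)) = F*t^2/2 := by
      rw [hFdef, htdef]; field_simp; ring
    rw [e6, e1, e2]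
    linarith

lemma key_ineq_strict {a b : ℝ} (ha : 0 ≤ a) (hb : 0 ≤ b) (hab : a ≠ b) :
    (a-b)^2/(4*(a+b)) < (a * Real.log a + b * Real.log b)/2 - ((a+b)/2 - 1) := by
  have hs : 0 < a + b := by
    rcases eq_or_lt_of_le (by linarith : (0:ℝ) ≤ a + b) with hs|hs
    · exact absurd (by linarith : a = b) hab
    · exact hs
  set F : ℝ := (a+b)/2 with hFdef
  set t : ℝ := (a-b)/(a+b) with htdef
  have hF : 0 < F := by positivity
  have ha' : a = F*(1+t) := by rw [hFdef, htdef]; field_simp; ring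
  have hb' : b = F*(1+(-t)) := by rw [hFdef, htdef]; field_simp; ring
  have ht : t ∈ Set.Icc (-1:ℝ) 1 := by
    constructor
    · rw [htdef, le_div_iff₀ hs]; linarith
    · rw [htdef, div_le_one hs]; linarith
  have ht0 : t ≠ 0 := by
    rw [htdef]
    exact div_ne_zero (sub_ne_zero.mpr hab) hs.ne'
  have e1 : a * Real.log a = a * Real.log F + a * Real.log (1+t) :=
    aux_split ha hF ha'
  have e2 : b * Real.log b = b * Real.log F + b * Real.log (1-t) := by
    have := aux_split hb hF hb'
    rw [show (1:ℝ)+(-t) = 1-t by ring] at this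
    exact this
  have h2F : a + b = 2*F := by rw [hFdef]; ring
  have e3 : a * Real.log F + b * Real.log F = 2*(F*Real.log F) :=
    calc a * Real.log F + b * Real.log F = (a+b) * Real.log F := by ring
      _ = 2*(F*Real.log F) := by rw [h2F]; ring
  have e4 : F - 1 ≤ F * Real.log F := aux_mul_log_ge hF
  have e5' : F*((1+t)*Real.log (1+t)+(1-t)*Real.log (1-t))
      = a*Real.log (1+t) + b*Real.log (1-t) := by
    rw [ha', hb']; ring
  have e5 : F*t^2 < a*Real.log (1+t) + b*Real.log (1-t) := by
    rw [← e5']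
    exact (mul_lt_mul_iff_right₀ hF).mpr (aux_phi_strict ht ht0)
  have e6 : (a-b)^2/(4*(a+b)) = F*t^2/2 := by
    rw [hFdef, htdef]; field_simp; ring
  rw [e6, e1, e2]
  linarith

lemma quad_ineq {a b : ℝ} (z lam : ℝ) (ha : 0 ≤ a) (hb : 0 ≤ b) :
    lam*(a*z - b*z) - lam^2*(a*z^2 + b*z^2) ≤ (a-b)^2/(4*(a+b)) := by
  rcases eq_or_lt_of_le (by linarith : (0:ℝ) ≤ a + b) with hs|hs
  · have ha0 : a = 0 := by linarith
    have hb0 : b = 0 := by linarith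
    subst ha0; subst hb0
    norm_num
  · rw [le_div_iff₀ (by positivity : (0:ℝ) < 4*(a+b))]
    nlinarith [sq_nonneg ((a-b) - 2*lam*z*(a+b))]


theorem relative_entropy_gt
    (ρ μ : Measure ℝ) [IsProbabilityMeasure ρ] [IsProbabilityMeasure μ]
    (hsym : ρ.map (fun z => -z) = ρ) (hρ : ρ ≠ Measure.dirac 0)
    (hm1 : Integrable (fun z => z) μ) (hμρ : μ ≠ ρ)
    (hmean : ∫ z, z ∂μ ≠ 0)
    (hm2 : Integrable (fun z => z ^ 2) μ)
    (hac : μ ≪ ρ) (f : ℝ → ℝ)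
    (hf : ∀ᵐ z ∂ρ, f z = (μ.rnDeriv ρ z).toReal)
    (hH : Integrable (fun z => f z * Real.log (f z)) ρ) :
    ∫ z, f z * Real.log (f z) ∂ρ
      > (∫ z, z ∂μ) ^ 2 / (2 * ∫ z, z ^ 2 ∂μ) := by
  set g : ℝ → ℝ := fun z => (μ.rnDeriv ρ z).toReal with hgdef
  have hg_meas : Measurable g := (Measure.measurable_rnDeriv μ ρ).ennreal_toReal
  have hg_nonneg : ∀ z, 0 ≤ g z := fun z => ENNReal.toReal_nonneg
  set m : ℝ := ∫ z, z ∂μ with hmdef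
  set s2 : ℝ := ∫ z, z ^ 2 ∂μ with hs2def
  -- the negation equiv
  set e : ℝ ≃ᵐ ℝ := (Homeomorph.neg ℝ).toMeasurableEquiv with hedef
  have hec : ⇑e = fun z : ℝ => -z := rfl
  have hmap : Measure.map e ρ = ρ := by rw [hec]; exact hsym
  have int_sym : ∀ φ : ℝ → ℝ, ∫ z, φ (-z) ∂ρ = ∫ z, φ z ∂ρ := by
    intro φ
    conv_rhs => rw [← hmap, MeasureTheory.integral_map_equiv]
    rfl
  have intg_sym : ∀ φ : ℝ → ℝ, Integrable φ ρ → Integrable (fun z => φ (-z)) ρ := by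
    intro φ h
    rw [← hmap] at h
    exact (integrable_map_equiv e φ).mp h
  -- integrability over ρ
  have hg_int : Integrable g ρ := Measure.integrable_toReal_rnDeriv
  have hzg : Integrable (fun z => g z * z) ρ := by
    have := (integrable_rnDeriv_smul_iff (f := fun z : ℝ => z) hac).mpr hm1
    simpa [smul_eq_mul] using this
  have hz2g : Integrable (fun z => g z * z^2) ρ := by
    have := (integrable_rnDeriv_smul_iff (f := fun z : ℝ => z^2) hac).mpr hm2
    simpa [smul_eq_mul] using this
  have hglog : Integrable (fun z => g z * Real.log (g z)) ρ :=
    hH.congr (hf.mono fun z hz => by simp only [hgdef, hz])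
  -- integral values over ρ
  have hint_m : ∫ z, g z * z ∂ρ = m := by
    have := integral_rnDeriv_smul (f := fun z : ℝ => z) hac
    simpa [smul_eq_mul] using this
  have hint_s : ∫ z, g z * z^2 ∂ρ = s2 := by
    have := integral_rnDeriv_smul (f := fun z : ℝ => z^2) hac
    simpa [smul_eq_mul] using this
  have hint_one : ∫ z, g z ∂ρ = 1 := by
    have h := Measure.integral_toReal_rnDeriv hac
    simp at h
    exact h
  -- symmetric versions
  have hg'_int : Integrable (fun z => g (-z)) ρ := intg_sym g hg_int
  have hzg' : Integrable (fun z => g (-z) * z) ρ := by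
    have h1 := intg_sym (fun z => g z * z) hzg
    exact h1.neg.congr (Filter.Eventually.of_forall fun z => by simp)
  have hz2g' : Integrable (fun z => g (-z) * z^2) ρ := by
    have h1 := intg_sym (fun z => g z * z^2) hz2g
    exact h1.congr (Filter.Eventually.of_forall fun z => by simp)
  have hg'log : Integrable (fun z => g (-z) * Real.log (g (-z))) ρ :=
    intg_sym (fun z => g z * Real.log (g z)) hglog
  have hint_m' : ∫ z, g (-z) * z ∂ρ = -m := by
    have h1 := int_sym (fun z => g z * z)
    simp only [mul_neg] at h1
    rw [integral_neg] at h1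
    rw [hint_m] at h1
    linarith
  have hint_s' : ∫ z, g (-z) * z^2 ∂ρ = s2 := by
    have h1 := int_sym (fun z => g z * z^2)
    simp only [neg_sq] at h1
    rw [hint_s] at h1
    exact h1
  have hint_one' : ∫ z, g (-z) ∂ρ = 1 := (int_sym g).trans hint_one
  set H : ℝ := ∫ z, g z * Real.log (g z) ∂ρ with hHdef
  have hint_H' : ∫ z, g (-z) * Real.log (g (-z)) ∂ρ = H :=
    int_sym (fun z => g z * Real.log (g z))
  -- rewrite the goal
  have hgoal_lhs : ∫ z, f z * Real.log (f z) ∂ρ = H :=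
    integral_congr_ae (hf.mono fun z hz => by simp only [hgdef, hz])
  rw [hgoal_lhs]
  -- M and q
  set M : ℝ → ℝ := fun z =>
    (g z * Real.log (g z) + g (-z) * Real.log (g (-z)))/2 - ((g z + g (-z))/2 - 1)
    with hMdef
  set q : ℝ → ℝ := fun z => (g z - g (-z))^2 / (4*(g z + g (-z))) with hqdef
  have hA_int : Integrable (fun z => (g z * Real.log (g z) + g (-z) * Real.log (g (-z)))/2) ρ :=
    (hglog.add hg'log).div_const 2
  have hB_int : Integrable (fun z => (g z + g (-z))/2 - 1) ρ :=
    ((hg_int.add hg'_int).div_const 2).sub (integrable_const 1)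
  have hM_int : Integrable M ρ := hA_int.sub hB_int
  have hM_val : ∫ z, M z ∂ρ = H := by
    have e1 : ∫ z, M z ∂ρ
        = (∫ z, (g z * Real.log (g z) + g (-z) * Real.log (g (-z)))/2 ∂ρ)
          - ∫ z, ((g z + g (-z))/2 - 1) ∂ρ := integral_sub hA_int hB_int
    have e2 : ∫ z, (g z * Real.log (g z) + g (-z) * Real.log (g (-z)))/2 ∂ρ
        = (∫ z, (g z * Real.log (g z) + g (-z) * Real.log (g (-z))) ∂ρ)/2 :=
      integral_div _ _
    have e2' : ∫ z, (g z * Real.log (g z) + g (-z) * Real.log (g (-z))) ∂ρ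
        = H + H := (integral_add hglog hg'log).trans (by rw [hint_H'])
    have e3 : ∫ z, ((g z + g (-z))/2 - 1) ∂ρ
        = (∫ z, (g z + g (-z))/2 ∂ρ) - ∫ z, (1:ℝ) ∂ρ :=
      integral_sub ((hg_int.add hg'_int).div_const 2) (integrable_const 1)
    have e4 : ∫ z, (g z + g (-z))/2 ∂ρ = (∫ z, (g z + g (-z)) ∂ρ)/2 := integral_div _ _
    have e4' : ∫ z, (g z + g (-z)) ∂ρ = 1 + 1 :=
      (integral_add hg_int hg'_int).trans (by rw [hint_one, hint_one'])
    have e5 : ∫ z, (1:ℝ) ∂ρ = 1 := by simp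
    rw [e1, e2, e2', e3, e4, e4', e5]
    ring
  have hq_nonneg : ∀ z, 0 ≤ q z := by
    intro z
    have h1 := hg_nonneg z
    have h2 := hg_nonneg (-z)
    have : q z = (g z - g (-z))^2 / (4*(g z + g (-z))) := rfl
    rw [this]
    positivity
  have hq_le : ∀ z, q z ≤ M z := fun z => key_ineq (hg_nonneg z) (hg_nonneg (-z))
  have hq_meas : Measurable q := by
    have hgn : Measurable (fun z : ℝ => g (-z)) := hg_meas.comp measurable_neg
    exact ((hg_meas.sub hgn).pow_const 2).div
      ((measurable_const.mul (hg_meas.add hgn)))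
  have hq_int : Integrable q ρ := by
    apply hM_int.mono' hq_meas.aestronglyMeasurable
    filter_upwards with z
    rw [Real.norm_eq_abs, abs_of_nonneg (hq_nonneg z)]
    exact hq_le z
  -- strict inequality between ∫ q and ∫ M
  have hne : ¬ (∀ᵐ z ∂ρ, g z = g (-z)) := by
    intro hcontra
    have heq : ∫ z, g z * z ∂ρ = ∫ z, g (-z) * z ∂ρ :=
      integral_congr_ae (hcontra.mono fun z hz => by simp only [hz])
    rw [hint_m, hint_m'] at heq
    exact hmean (by linarith)
  have hlt : ∫ z, q z ∂ρ < ∫ z, M z ∂ρ := by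
    have hD_int : Integrable (fun z => M z - q z) ρ := hM_int.sub hq_int
    have hpos : 0 < ∫ z, (M z - q z) ∂ρ := by
      rw [integral_pos_iff_support_of_nonneg (fun z => sub_nonneg.mpr (hq_le z)) hD_int]
      refine pos_iff_ne_zero.mpr fun h0 => hne ?_
      have hsub : {z : ℝ | ¬ g z = g (-z)} ⊆
          Function.support (fun z => M z - q z) := by
        intro z hz
        exact sub_ne_zero.mpr
          (key_ineq_strict (hg_nonneg z) (hg_nonneg (-z)) hz).ne'
      rw [ae_iff]
      exact measure_mono_null hsub h0
    have hsplit : ∫ z, (M z - q z) ∂ρ = (∫ z, M z ∂ρ) - ∫ z, q z ∂ρ :=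
      integral_sub hM_int hq_int
    rw [hsplit] at hpos
    linarith
  -- positivity of s2
  have hs2_nonneg : 0 ≤ s2 := integral_nonneg (fun z => sq_nonneg z)
  have hs2_pos : 0 < s2 := by
    rcases hs2_nonneg.lt_or_eq with h|h
    · exact h
    · exfalso
      have hz2 : (fun z : ℝ => z^2) =ᵐ[μ] 0 :=
        (integral_eq_zero_iff_of_nonneg (fun z => sq_nonneg z) hm2).mp h.symm
      have hz : (fun z : ℝ => z) =ᵐ[μ] 0 := by
        filter_upwards [hz2] with z hz
        have : z^2 = 0 := hz
        have := pow_eq_zero_iff (n := 2) (by norm_num) |>.mp this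
        simpa using this
      apply hmean
      calc ∫ z, z ∂μ = ∫ _, (0:ℝ) ∂μ := integral_congr_ae hz
        _ = 0 := integral_zero _ _
  -- lower bound for ∫ q
  set lam : ℝ := m / (2*s2) with hlamdef
  set r : ℝ → ℝ := fun z =>
    lam*(g z * z - g (-z) * z) - lam^2*(g z * z^2 + g (-z) * z^2) with hrdef
  have hrA : Integrable (fun z => lam*(g z * z - g (-z) * z)) ρ :=
    (hzg.sub hzg').const_mul lam
  have hrB : Integrable (fun z => lam^2*(g z * z^2 + g (-z) * z^2)) ρ :=
    (hz2g.add hz2g').const_mul (lam^2)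
  have hr_int : Integrable r ρ := hrA.sub hrB
  have hr_le : ∀ z, r z ≤ q z := by
    intro z
    exact quad_ineq z lam (hg_nonneg z) (hg_nonneg (-z))
  have hr_val : ∫ z, r z ∂ρ = m^2/(2*s2) := by
    have e1 : ∫ z, r z ∂ρ = (∫ z, lam*(g z * z - g (-z) * z) ∂ρ)
        - ∫ z, lam^2*(g z * z^2 + g (-z) * z^2) ∂ρ := integral_sub hrA hrB
    have e2 : ∫ z, lam*(g z * z - g (-z) * z) ∂ρ
        = lam * ∫ z, (g z * z - g (-z) * z) ∂ρ := integral_const_mul _ _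
    have e2' : ∫ z, (g z * z - g (-z) * z) ∂ρ = m - (-m) :=
      (integral_sub hzg hzg').trans (by rw [hint_m, hint_m'])
    have e3 : ∫ z, lam^2*(g z * z^2 + g (-z) * z^2) ∂ρ
        = lam^2 * ∫ z, (g z * z^2 + g (-z) * z^2) ∂ρ := integral_const_mul _ _
    have e3' : ∫ z, (g z * z^2 + g (-z) * z^2) ∂ρ = s2 + s2 :=
      (integral_add hz2g hz2g').trans (by rw [hint_s, hint_s'])
    rw [e1, e2, e2', e3, e3', hlamdef]
    field_simp
    ring
  have hq_lb : m^2/(2*s2) ≤ ∫ z, q z ∂ρ := by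
    rw [← hr_val]
    exact integral_mono hr_int hq_int hr_le
  calc m^2/(2*s2) ≤ ∫ z, q z ∂ρ := hq_lb
    _ < ∫ z, M z ∂ρ := hlt
    _ = H := hM_val
end

section
/- Let ρ be a symmetric probability measure on ℝ which is not the Dirac mass at 0, and let x, y be nonzero reals. Then (x/y)·x + (-x²/(2y²))·y - log ∫ exp((x/y) z - (x²/(2y²)) z²) dρ(z) > x²/(2y). -/
open MeasureTheory

lemma cosh_lt_exp_half_sq_aux (u : ℝ) (hu : u ≠ 0) :
    Real.cosh u < Real.exp (u ^ 2 / 2) := by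
  set_option maxHeartbeats 1000000 in
  rw [Real.cosh_eq_tsum, Real.exp_eq_exp_ℝ, NormedSpace.exp_eq_tsum ℝ]
  set_option maxHeartbeats 1000000 in
  refine Summable.tsum_lt_tsum (i := 2)
    (fun i => ?_) ?_ u.hasSum_cosh.summable (NormedSpace.expSeries_summable' (u ^ 2 / 2))
  · simp only [div_pow, pow_mul, smul_eq_mul, inv_mul_eq_div, div_div]
    gcongr
    norm_cast
    exact Nat.two_pow_mul_factorial_le_factorial_two_mul _
  · simp only [div_pow, pow_mul, smul_eq_mul, inv_mul_eq_div, div_div]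
    have h4 : (0:ℝ) < (u ^ 2) ^ 2 := by positivity
    rw [div_lt_div_iff₀ (by norm_num [Nat.factorial]) (by norm_num [Nat.factorial])]
    norm_num [Nat.factorial]
    nlinarith

theorem cramer_test_point_gt
    (ρ : Measure ℝ) [IsProbabilityMeasure ρ]
    (hsym : ρ.map (fun z => -z) = ρ) (hρ : ρ ≠ Measure.dirac 0)
    (x y : ℝ) (hx : x ≠ 0) (hy : y ≠ 0) :
    (x / y) * x + (-(x ^ 2 / (2 * y ^ 2))) * y
      - Real.log (∫ z, Real.exp ((x / y) * z - (x ^ 2 / (2 * y ^ 2)) * z ^ 2) ∂ρ)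
      > x ^ 2 / (2 * y) := by
  set t : ℝ := x / y with ht_def
  have ht : t ≠ 0 := div_ne_zero hx hy
  have hs : x ^ 2 / (2 * y ^ 2) = t ^ 2 / 2 := by
    rw [ht_def]; field_simp
  set f : ℝ → ℝ := fun z => Real.exp (t * z - t ^ 2 / 2 * z ^ 2) with hf_def
  have hf_bound : ∀ z, f z ≤ Real.exp (1 / 2) := by
    intro z
    apply Real.exp_le_exp.mpr
    nlinarith [sq_nonneg (t * z - 1)]
  have hf_meas : Measurable f := by
    apply Real.measurable_exp.comp
    fun_prop
  have hf_int : Integrable f ρ := by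
    refine Integrable.mono' (integrable_const (Real.exp (1/2))) hf_meas.aestronglyMeasurable
      (Filter.Eventually.of_forall fun z => ?_)
    rw [Real.norm_eq_abs, abs_of_pos (Real.exp_pos _)]
    exact hf_bound z
  have hf_neg_int : Integrable (fun z => f (-z)) ρ := by
    refine Integrable.mono' (integrable_const (Real.exp (1/2)))
      (hf_meas.comp measurable_neg).aestronglyMeasurable
      (Filter.Eventually.of_forall fun z => ?_)
    rw [Real.norm_eq_abs, abs_of_pos (Real.exp_pos _)]
    exact hf_bound _
  have hsym_int : ∫ z, f z ∂ρ = ∫ z, f (-z) ∂ρ := by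
    conv_lhs => rw [← hsym]
    rw [integral_map measurable_neg.aemeasurable hf_meas.aestronglyMeasurable]
  set I : ℝ := ∫ z, f z ∂ρ with hI_def
  have hI_pos : 0 < I := by
    rw [hI_def]
    refine (integral_pos_iff_support_of_nonneg (fun z => (Real.exp_pos _).le) hf_int).mpr ?_
    have : Function.support f = Set.univ := by
      ext z; simp [hf_def, (Real.exp_pos _).ne']
    rw [this]
    simp [(IsProbabilityMeasure.ne_zero ρ)]
  have h0 : ρ {(0:ℝ)}ᶜ ≠ 0 := by
    intro hc
    apply hρ
    have h1 : ρ {(0:ℝ)} = 1 := by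
      have := measure_add_measure_compl (μ := ρ) (measurableSet_singleton (0:ℝ))
      rw [hc, add_zero] at this
      simpa using this
    ext s hs'
    rw [Measure.dirac_apply' _ hs']
    by_cases h0s : (0:ℝ) ∈ s
    · have hle : ρ {(0:ℝ)} ≤ ρ s := measure_mono (Set.singleton_subset_iff.mpr h0s)
      have hge : ρ s ≤ 1 := prob_le_one (μ := ρ)
      rw [h1] at hle
      have h1s : ρ s = 1 := le_antisymm hge hle
      rw [h1s, Set.indicator_of_mem h0s, Pi.one_apply]
    · have hsub : s ⊆ {(0:ℝ)}ᶜ := fun z hz => by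
        simp only [Set.mem_compl_iff, Set.mem_singleton_iff]
        rintro rfl; exact h0s hz
      have hmono : ρ s ≤ ρ {(0:ℝ)}ᶜ := measure_mono hsub
      rw [hc] at hmono
      have hzero : ρ s = 0 := le_antisymm hmono zero_le
      rw [hzero, Set.indicator_of_notMem h0s]
  -- symmetrized form
  have hsum : ∀ z : ℝ, f z + f (-z)
      = 2 * Real.cosh (t * z) * Real.exp (-(t ^ 2 / 2 * z ^ 2)) := by
    intro z
    have h1 : ∀ w : ℝ, f w = Real.exp (t * w) * Real.exp (-(t ^ 2 / 2 * w ^ 2)) := by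
      intro w
      rw [hf_def, ← Real.exp_add]
      ring_nf
    rw [h1 z, h1 (-z)]
    have e1 : t * -z = -(t * z) := by ring
    have e2 : ((-z : ℝ)) ^ 2 = z ^ 2 := by ring
    rw [e1, e2, Real.cosh_eq]
    ring
  have hexp1 : ∀ z : ℝ, Real.exp ((t * z) ^ 2 / 2) * Real.exp (-(t ^ 2 / 2 * z ^ 2)) = 1 := by
    intro z
    rw [← Real.exp_add]
    have : (t * z) ^ 2 / 2 + -(t ^ 2 / 2 * z ^ 2) = 0 := by ring
    rw [this, Real.exp_zero]
  have hI_lt : I < 1 := by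
    set g : ℝ → ℝ := fun z => 1 - (f z + f (-z)) / 2 with hg_def
    have hg_nonneg : ∀ z, 0 ≤ g z := by
      intro z
      have key : f z + f (-z) ≤ 2 := by
        rw [hsum z]
        calc 2 * Real.cosh (t * z) * Real.exp (-(t ^ 2 / 2 * z ^ 2))
            ≤ 2 * Real.exp ((t * z) ^ 2 / 2) * Real.exp (-(t ^ 2 / 2 * z ^ 2)) := by
              have h2 := Real.cosh_le_exp_half_sq (t * z)
              have h3 := (Real.exp_pos (-(t ^ 2 / 2 * z ^ 2))).le
              nlinarith
          _ = 2 := by rw [mul_assoc, hexp1, mul_one]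
      simp only [hg_def]; linarith
    have hsum_int : Integrable (fun z => (f z + f (-z)) / 2) ρ :=
      (hf_int.add hf_neg_int).div_const 2
    have hg_int : Integrable g ρ := (integrable_const 1).sub hsum_int
    have hg_pos : 0 < ∫ z, g z ∂ρ := by
      refine (integral_pos_iff_support_of_nonneg hg_nonneg hg_int).mpr ?_
      have hsupp : {(0:ℝ)}ᶜ ⊆ Function.support g := by
        intro z hz
        simp only [Set.mem_compl_iff, Set.mem_singleton_iff] at hz
        have key : f z + f (-z) < 2 := by
          rw [hsum z]
          calc 2 * Real.cosh (t * z) * Real.exp (-(t ^ 2 / 2 * z ^ 2))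
              < 2 * Real.exp ((t * z) ^ 2 / 2) * Real.exp (-(t ^ 2 / 2 * z ^ 2)) := by
                have h2 := cosh_lt_exp_half_sq_aux (t * z) (mul_ne_zero ht hz)
                have h3 := Real.exp_pos (-(t ^ 2 / 2 * z ^ 2))
                nlinarith
            _ = 2 := by rw [mul_assoc, hexp1, mul_one]
        simp only [Function.mem_support, hg_def]
        intro hc
        have : f z + f (-z) = 2 := by linarith [sub_eq_zero.mp hc]
        linarith
      have hms : ρ {(0:ℝ)}ᶜ ≤ ρ (Function.support g) := measure_mono hsupp
      exact lt_of_lt_of_le (by simpa [pos_iff_ne_zero] using h0) hms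
    have hint_g : ∫ z, g z ∂ρ = 1 - I := by
      simp only [hg_def]
      rw [integral_sub (integrable_const 1) hsum_int, integral_div,
        integral_add hf_int hf_neg_int, ← hsym_int, ← hI_def]
      simp only [integral_const, probReal_univ, ENNReal.toReal_one, smul_eq_mul, one_mul]
      ring
    rw [hint_g] at hg_pos
    linarith
  have hlog : Real.log I < 0 := Real.log_neg hI_pos hI_lt
  have halg : (x / y) * x + (-(x ^ 2 / (2 * y ^ 2))) * y = x ^ 2 / (2 * y) := by
    field_simp
    ring
  have hIeq : (∫ z, Real.exp ((x / y) * z - (x ^ 2 / (2 * y ^ 2)) * z ^ 2) ∂ρ) = I := by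
    rw [hI_def, hf_def]
    congr 1
    ext z
    rw [hs, ht_def]
  rw [hIeq, halg]
  linarith
end
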